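/- The formal power series Σ_{k≥0} H(k) z^k, where H(0)=H(1)=0, H(2)=4, H(3)=20, and H(k) = 3k² + k − 6 for k > 3, equals the rational function 2z²(2 + 4z − z² − 4z³ + 2z⁴)/(1−z)³. -/

import Mathlib

open PowerSeries

/-- Hilbert function for the symmetry pseudogroup action on the self-duality equation. -/
noncomputable def Hsde : ℕ → ℚ := fun k =>
  if k < 2 then 0
  else if k = 2 then 4
  else if k = 3 then 20
  else 3 * (k : ℚ) ^ 2 + (k : ℚ) - 6

theorem stmt_4 :
    PowerSeries.mk Hsde =
      2 * (X : PowerSeries ℚ) ^ 2 * (2 + 4 * X - X ^ 2 - 4 * X ^ 3 + 2 * X ^ 4)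
        * ((1 - (X : PowerSeries ℚ))⁻¹) ^ 3 := by
  have h1 : (1 - (X : PowerSeries ℚ))⁻¹ * (1 - X) = 1 :=
    PowerSeries.inv_mul_cancel _ (by simp)
  have hne : (1 - (X : PowerSeries ℚ)) ^ 3 ≠ 0 := by
    apply pow_ne_zero
    intro h
    have := congrArg constantCoeff h
    simp at this
  apply mul_right_cancel₀ hne
  rw [mul_assoc, ← mul_pow, h1, one_pow, mul_one]
  have hC : ∀ m : ℕ, C (m : ℚ) = ((m : ℚ⟦X⟧)) := by
    intro m; simp
  have key : PowerSeries.mk Hsde * (1 - X) ^ 3 =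
      C (R := ℚ) 4 * X ^ 2 + C (R := ℚ) 8 * X ^ 3 - C (R := ℚ) 2 * X ^ 4 - C (R := ℚ) 8 * X ^ 5 + C (R := ℚ) 4 * X ^ 6 := by
    have hexp2 : PowerSeries.mk Hsde * (1 - (X : PowerSeries ℚ)) ^ 3 =
        PowerSeries.mk Hsde - C (R := ℚ) 3 * (PowerSeries.mk Hsde * X ^ 1)
          + C (R := ℚ) 3 * (PowerSeries.mk Hsde * X ^ 2) - PowerSeries.mk Hsde * X ^ 3 := by
      have := hC 3; push_cast at this
      rw [this]; ring
    rw [hexp2]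
    ext n
    simp only [map_add, map_sub, coeff_C_mul, coeff_mul_X_pow', coeff_X_pow, coeff_C, coeff_mk]
    rcases n with _|_|_|_|_|_|_|n
    · norm_num [Hsde]
    · norm_num [Hsde]
    · norm_num [Hsde]
    · norm_num [Hsde]
    · norm_num [Hsde]
    · norm_num [Hsde]
    · norm_num [Hsde]
    · have hH : ∀ m : ℕ, 4 ≤ m → Hsde m = 3 * (m : ℚ) ^ 2 + (m : ℚ) - 6 := by
        intro m hm
        simp only [Hsde]
        rw [if_neg (by omega), if_neg (by omega), if_neg (by omega)]
      simp only [if_pos (show (1:ℕ) ≤ n + 1 + 1 + 1 + 1 + 1 + 1 + 1 by omega),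
        if_pos (show (2:ℕ) ≤ n + 1 + 1 + 1 + 1 + 1 + 1 + 1 by omega),
        if_pos (show (3:ℕ) ≤ n + 1 + 1 + 1 + 1 + 1 + 1 + 1 by omega),
        if_pos (show (4:ℕ) ≤ n + 1 + 1 + 1 + 1 + 1 + 1 + 1 by omega),
        if_pos (show (5:ℕ) ≤ n + 1 + 1 + 1 + 1 + 1 + 1 + 1 by omega),
        if_pos (show (6:ℕ) ≤ n + 1 + 1 + 1 + 1 + 1 + 1 + 1 by omega),
        if_neg (show ¬(n + 1 + 1 + 1 + 1 + 1 + 1 + 1 - 2 = 0) by omega),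
        if_neg (show ¬(n + 1 + 1 + 1 + 1 + 1 + 1 + 1 - 3 = 0) by omega),
        if_neg (show ¬(n + 1 + 1 + 1 + 1 + 1 + 1 + 1 - 4 = 0) by omega),
        if_neg (show ¬(n + 1 + 1 + 1 + 1 + 1 + 1 + 1 - 5 = 0) by omega),
        if_neg (show ¬(n + 1 + 1 + 1 + 1 + 1 + 1 + 1 - 6 = 0) by omega)]
      have e1 : n + 1 + 1 + 1 + 1 + 1 + 1 + 1 - 1 = n + 6 := by omega
      have e2 : n + 1 + 1 + 1 + 1 + 1 + 1 + 1 - 2 = n + 5 := by omega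
      have e3 : n + 1 + 1 + 1 + 1 + 1 + 1 + 1 - 3 = n + 4 := by omega
      rw [e1, e2, e3, hH _ (by omega), hH _ (by omega), hH _ (by omega), hH _ (by omega)]
      push_cast
      ring
  rw [key]
  have h4 := hC 4; have h8 := hC 8; have h2 := hC 2
  push_cast at h4 h8 h2
  rw [h4, h8, h2]
  ring
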